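/- In the Reverse Firework process on ℕ, if r := ∏_{k≥0} α_k > 0, then the rumor dies out almost surely and the final number N of spreaders has geometric distribution with parameter r: P(N = m) = (1-r)^{m-1} r for m ≥ 1. -/

import Mathlib

open Finset
open scoped ENNReal

namespace RumorAux

/-- Largest element of `S` (0 for empty). -/
noncomputable def mx (S : Finset ℕ) : ℕ := S.max.getD 0

lemma mx_spec {S : Finset ℕ} (hne : S.Nonempty) :
    mx S ∈ S ∧ ∀ m ∈ S, m ≤ mx S := by
  have h : S.max = (S.max' hne : ℕ) := (Finset.coe_max' hne).symm
  have hm : mx S = S.max' hne := by unfold mx; rw [h]; rfl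
  exact ⟨hm ▸ S.max'_mem hne, fun m hmS => hm ▸ Finset.le_max' S m hmS⟩

/-- Largest element of `S` strictly below `n` (0 by default). -/
noncomputable def pr (S : Finset ℕ) (n : ℕ) : ℕ := ((S.filter (fun m => m < n)).max).getD 0

lemma pr_spec {S : Finset ℕ} (h0 : 0 ∈ S) {n : ℕ} (hn : 0 < n) :
    pr S n ∈ S ∧ pr S n < n ∧ ∀ m ∈ S, m < n → m ≤ pr S n := by
  have hne : (S.filter (fun m => m < n)).Nonempty := ⟨0, by simp [h0, hn]⟩
  have h : (S.filter (fun m => m < n)).max = ((S.filter (fun m => m < n)).max' hne : ℕ) :=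
    (Finset.coe_max' hne).symm
  have hpr : pr S n = (S.filter (fun m => m < n)).max' hne := by unfold pr; rw [h]; rfl
  have hmem := Finset.max'_mem (S.filter (fun m => m < n)) hne
  rw [Finset.mem_filter] at hmem
  refine ⟨hpr ▸ hmem.1, hpr ▸ hmem.2, fun m hm hmn => ?_⟩
  rw [hpr]
  exact Finset.le_max' (S.filter (fun m => m < n)) m (Finset.mem_filter.2 ⟨hm, hmn⟩)

/-- Condition on the radius of site `n` making its informedness pattern agree with `S`. -/
def cond (S : Finset ℕ) (n : ℕ) (x : ℕ) : Prop :=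
  if n ∈ S then n - pr S n ≤ x else x < n - pr S n

/-- the informedness pattern up to `u` agrees with `S`. -/
def pat (z : ℕ → Bool) (S : Finset ℕ) (u : ℕ) : Prop := ∀ n ≤ u, (z n = true ↔ n ∈ S)

/-- all radii after `t` are too small to reach back to `t`. -/
def aft (ρ : ℕ → ℕ) (t : ℕ) : Prop := ∀ i, ρ (t + 1 + i) ≤ i

section Pure

variable {z : ℕ → Bool} {ρ : ℕ → ℕ}

lemma pat_iff (hz0 : z 0 = true)
    (hz : ∀ n, 0 < n → (z n = true ↔ ∃ m < n, z m = true ∧ n - m ≤ ρ n))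
    {S : Finset ℕ} (h0 : 0 ∈ S) (u : ℕ) :
    pat z S u ↔ ∀ n, 1 ≤ n → n ≤ u → cond S n (ρ n) := by
  induction u with
  | zero =>
    constructor
    · intro _ n h1 h0'; omega
    · intro _ n hn
      have : n = 0 := Nat.le_zero.mp hn
      subst this
      simp [hz0, h0]
  | succ u ih =>
    have key : pat z S u → (z (u+1) = true ↔ u + 1 - pr S (u+1) ≤ ρ (u+1)) := by
      intro hp
      rw [hz (u+1) (Nat.succ_pos u)]
      obtain ⟨hprS, hprlt, hprmax⟩ := pr_spec h0 (Nat.succ_pos u)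
      constructor
      · rintro ⟨m, hm, hzm, hle⟩
        have hmS : m ∈ S := (hp m (Nat.lt_succ_iff.mp hm)).1 hzm
        exact le_trans (Nat.sub_le_sub_left (hprmax m hmS hm) (u+1)) hle
      · intro h
        exact ⟨pr S (u+1), hprlt, (hp _ (Nat.lt_succ_iff.mp hprlt)).2 hprS, h⟩
    have main : ∀ (hp : pat z S u),
        ((z (u+1) = true ↔ (u+1) ∈ S) ↔ cond S (u+1) (ρ (u+1))) := by
      intro hp
      obtain ⟨hprS, hprlt, _⟩ := pr_spec h0 (Nat.succ_pos u)
      rw [key hp]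
      unfold cond
      by_cases hmem : u + 1 ∈ S
      · simp [hmem]
      · simp only [hmem, iff_false, if_neg, not_false_iff]
        omega
    have split1 : pat z S (u+1) ↔ pat z S u ∧ (z (u+1) = true ↔ (u+1) ∈ S) := by
      constructor
      · intro h
        exact ⟨fun n hn => h n (le_trans hn (Nat.le_succ u)), h (u+1) le_rfl⟩
      · rintro ⟨h1, h2⟩ n hn
        rcases eq_or_lt_of_le hn with h | h
        · subst h; exact h2
        · exact h1 n (Nat.lt_succ_iff.mp h)
    have split2 : (∀ n, 1 ≤ n → n ≤ u + 1 → cond S n (ρ n)) ↔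
        (∀ n, 1 ≤ n → n ≤ u → cond S n (ρ n)) ∧ cond S (u+1) (ρ (u+1)) := by
      constructor
      · intro h
        exact ⟨fun n h1 hn => h n h1 (le_trans hn (Nat.le_succ u)), h (u+1) (by omega) le_rfl⟩
      · rintro ⟨h1, h2⟩ n hn1 hn
        rcases eq_or_lt_of_le hn with h | h
        · subst h; exact h2
        · exact h1 n hn1 (Nat.lt_succ_iff.mp h)
    rw [split1, split2]
    constructor
    · rintro ⟨h1, h2⟩
      exact ⟨ih.mp h1, (main h1).mp h2⟩
    · rintro ⟨h1, h2⟩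
      have hp := ih.mpr h1
      exact ⟨hp, (main hp).mpr h2⟩

lemma aft_iff
    (hz : ∀ n, 0 < n → (z n = true ↔ ∃ m < n, z m = true ∧ n - m ≤ ρ n))
    {S : Finset ℕ} {t : ℕ}
    (hp : pat z S t) (htS : t ∈ S) (hmax : ∀ m ∈ S, m ≤ t) :
    (∀ n, t < n → z n = false) ↔ aft ρ t := by
  constructor
  · intro h i
    by_contra hc
    push_neg at hc
    have hzt : z (t + 1 + i) = true := by
      rw [hz (t + 1 + i) (by omega)]
      exact ⟨t, by omega, (hp t le_rfl).2 htS, by omega⟩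
    have := h (t + 1 + i) (by omega)
    rw [this] at hzt
    exact Bool.false_ne_true hzt
  · intro h n
    induction n using Nat.strong_induction_on with
    | _ n ihn =>
      intro hn
      by_contra hc
      have hzn : z n = true := by
        cases hzb : z n
        · exact absurd hzb hc
        · rfl
      rw [hz n (by omega)] at hzn
      obtain ⟨m, hm, hzm, hle⟩ := hzn
      have hmt : m ≤ t := by
        by_contra hmt
        push_neg at hmt
        rw [ihn m hm hmt] at hzm
        exact Bool.false_ne_true hzm
      have h2 := h (n - t - 1)
      have he : t + 1 + (n - t - 1) = n := by omega
      rw [he] at h2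
      omega

/-- Within a pattern that dies after `t = mx S`, the informed set is exactly `S`. -/
lemma informed_eq {S : Finset ℕ} (h0 : 0 ∈ S)
    (hp : pat z S (mx S)) (hafter : ∀ n, mx S < n → z n = false) :
    {n | z n = true} = (↑S : Set ℕ) := by
  obtain ⟨hmem, hbd⟩ := mx_spec (⟨0, h0⟩ : S.Nonempty)
  ext n
  simp only [Set.mem_setOf_eq, Finset.coe_sort_coe, Finset.mem_coe]
  constructor
  · intro hzn
    by_cases hn : n ≤ mx S
    · exact (hp n hn).1 hzn
    · rw [hafter n (by omega)] at hzn
      exact absurd hzn Bool.false_ne_true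
  · intro hnS
    exact (hp n (hbd n hnS)).2 hnS

/-- Two patterns of the same cardinality coincide. -/
lemma pat_unique {S S' : Finset ℕ} {m : ℕ}
    (h0 : 0 ∈ S) (h0' : 0 ∈ S') (hc : S.card = m) (hc' : S'.card = m)
    (hp : pat z S (mx S)) (hp' : pat z S' (mx S')) : S = S' := by
  have key : ∀ (T T' : Finset ℕ), 0 ∈ T → 0 ∈ T' → pat z T (mx T) → pat z T' (mx T') →
      mx T ≤ mx T' → T ⊆ T' := by
    intro T T' hT hT' hpT hpT' hle n hn
    have hbd := (mx_spec (⟨0, hT⟩ : T.Nonempty)).2 n hn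
    have hz : z n = true := (hpT n hbd).2 hn
    exact (hpT' n (le_trans hbd hle)).1 hz
  rcases le_total (mx S) (mx S') with h | h
  · exact Finset.eq_of_subset_of_card_le (key S S' h0 h0' hp hp' h) (by omega)
  · exact (Finset.eq_of_subset_of_card_le (key S' S h0' h0 hp' hp h) (by omega)).symm

/-- Removing the top of an `(m+1)`-pattern yields an `m`-pattern. -/
lemma pat_erase {S' : Finset ℕ} {m : ℕ} (hm : 1 ≤ m)
    (hc' : S'.card = m + 1) (h0' : 0 ∈ S') (hp' : pat z S' (mx S')) :
    ∃ S : Finset ℕ, S.card = m ∧ 0 ∈ S ∧ pat z S (mx S) := by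
  obtain ⟨hmem', hbd'⟩ := mx_spec (⟨0, h0'⟩ : S'.Nonempty)
  set t' := mx S' with ht'
  have ht'pos : t' ≠ 0 := by
    intro h
    have hsub : S' ⊆ {0} := by
      intro n hn
      have := hbd' n hn
      rw [h] at this
      simp [Nat.le_zero.mp this]
    have := Finset.card_le_card hsub
    simp at this
    omega
  refine ⟨S'.erase t', ?_, ?_, ?_⟩
  · rw [Finset.card_erase_of_mem hmem', hc']
    omega
  · exact Finset.mem_erase.2 ⟨Ne.symm ht'pos, h0'⟩
  · set S := S'.erase t' with hS
    have hSne : S.Nonempty := ⟨0, Finset.mem_erase.2 ⟨Ne.symm ht'pos, h0'⟩⟩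
    obtain ⟨hmem, hbd⟩ := mx_spec hSne
    have hmxlt : mx S < t' := by
      have h1 : mx S ∈ S' := (Finset.erase_subset _ _) hmem
      have h2 : mx S ≠ t' := (Finset.mem_erase.1 hmem).1
      exact lt_of_le_of_ne (hbd' _ h1) h2
    intro n hn
    have hnt' : n ≤ t' := le_trans hn (le_of_lt hmxlt)
    rw [hp' n hnt']
    constructor
    · intro hnS'
      exact Finset.mem_erase.2 ⟨by omega, hnS'⟩
    · intro hnS
      exact (Finset.erase_subset _ _) hnS

/-- If the pattern does not die after `mx S`, it extends to an `(m+1)`-pattern. -/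
lemma pat_extend
    (hz : ∀ n, 0 < n → (z n = true ↔ ∃ m < n, z m = true ∧ n - m ≤ ρ n))
    {S : Finset ℕ} {m : ℕ}
    (hc : S.card = m) (h0 : 0 ∈ S) (hp : pat z S (mx S)) (hna : ¬ aft ρ (mx S)) :
    ∃ S' : Finset ℕ, S'.card = m + 1 ∧ 0 ∈ S' ∧ pat z S' (mx S') := by
  obtain ⟨hmem, hbd⟩ := mx_spec (⟨0, h0⟩ : S.Nonempty)
  set t := mx S with ht
  have hex : ∃ k, z (t + 1 + k) = true := by
    by_contra hne
    push_neg at hne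
    apply hna
    rw [← aft_iff hz hp hmem hbd]
    intro n hn
    have he : t + 1 + (n - t - 1) = n := by omega
    have := hne (n - t - 1)
    rw [he] at this
    exact Bool.not_eq_true _ |>.mp this
  classical
  set k0 := Nat.find hex with hk0
  have hzk0 : z (t + 1 + k0) = true := Nat.find_spec hex
  have hmin : ∀ j, j < k0 → z (t + 1 + j) = false := by
    intro j hj
    have := Nat.find_min hex hj
    exact Bool.not_eq_true _ |>.mp this
  set n0 := t + 1 + k0 with hn0
  have hn0S : n0 ∉ S := fun h => by have := hbd n0 h; omega
  refine ⟨insert n0 S, ?_, ?_, ?_⟩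
  · rw [Finset.card_insert_of_notMem hn0S, hc]
  · exact Finset.mem_insert_of_mem h0
  · have hne' : (insert n0 S).Nonempty := ⟨n0, Finset.mem_insert_self _ _⟩
    obtain ⟨hmem', hbd'⟩ := mx_spec hne'
    have hmx' : mx (insert n0 S) = n0 := by
      have h1 : n0 ≤ mx (insert n0 S) := hbd' n0 (Finset.mem_insert_self _ _)
      rcases Finset.mem_insert.1 hmem' with h | h
      · exact h.symm ▸ rfl
      · have := hbd _ h; omega
    rw [hmx']
    intro n hn
    rcases lt_trichotomy n n0 with hlt | heq | hgt
    · by_cases hnt : n ≤ t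
      · rw [hp n hnt, Finset.mem_insert]
        constructor
        · intro h; exact Or.inr h
        · rintro (h | h)
          · omega
          · exact h
      · push_neg at hnt
        have hj : n = t + 1 + (n - t - 1) := by omega
        have hjlt : n - t - 1 < k0 := by omega
        have hzf : z n = false := by rw [hj]; exact hmin _ hjlt
        rw [hzf]
        simp only [Bool.false_eq_true, false_iff, Finset.mem_insert]
        rintro (h | h)
        · omega
        · have := hbd n h; omega
    · subst heq
      simp [hzk0]
    · omega

/-- `{0}` is always a 1-pattern. -/
lemma pat_one (hz0 : z 0 = true) :
    ({0} : Finset ℕ).card = 1 ∧ 0 ∈ ({0} : Finset ℕ) ∧ pat z {0} (mx {0}) := by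
  refine ⟨rfl, Finset.mem_singleton_self 0, ?_⟩
  have hmx : mx ({0} : Finset ℕ) = 0 := by
    obtain ⟨h1, _⟩ := mx_spec (⟨0, Finset.mem_singleton_self 0⟩ : ({0} : Finset ℕ).Nonempty)
    simpa using h1
  rw [hmx]
  intro n hn
  have : n = 0 := Nat.le_zero.mp hn
  subst this
  simp [hz0]

/-- Patterns of larger cardinality are incompatible with a dead pattern. -/
lemma pat_aft_excl
    (hz : ∀ n, 0 < n → (z n = true ↔ ∃ m < n, z m = true ∧ n - m ≤ ρ n))
    {S S'' : Finset ℕ} {m m' : ℕ} (hmm : m < m')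
    (hc : S.card = m) (h0 : 0 ∈ S) (hp : pat z S (mx S)) (ha : aft ρ (mx S))
    (hc'' : S''.card = m') (h0'' : 0 ∈ S'') (hp'' : pat z S'' (mx S'')) : False := by
  obtain ⟨hmem, hbd⟩ := mx_spec (⟨0, h0⟩ : S.Nonempty)
  have hdead : ∀ n, mx S < n → z n = false := (aft_iff hz hp hmem hbd).2 ha
  have hsub : S'' ⊆ S := by
    intro n hn
    have hbd'' := (mx_spec (⟨0, h0''⟩ : S''.Nonempty)).2 n hn
    have hzn : z n = true := (hp'' n hbd'').2 hn
    have hnt : n ≤ mx S := by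
      by_contra hh
      push_neg at hh
      rw [hdead n hh] at hzn
      exact Bool.false_ne_true hzn
    exact (hp n hnt).1 hzn
  have := Finset.card_le_card hsub
  omega

/-- For `m ≥ 1`: the informed set has exactly `m` elements iff there is a dead `m`-pattern. -/
lemma ncard_iff
    (hz0 : z 0 = true)
    (hz : ∀ n, 0 < n → (z n = true ↔ ∃ m < n, z m = true ∧ n - m ≤ ρ n))
    {m : ℕ} (hm : 1 ≤ m) :
    {n | z n = true}.ncard = m ↔
      ∃ S : Finset ℕ, S.card = m ∧ 0 ∈ S ∧ pat z S (mx S) ∧ aft ρ (mx S) := by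
  constructor
  · intro hcard
    have hfin : {n | z n = true}.Finite := by
      rw [← Set.not_infinite]
      intro hinf
      rw [Set.Infinite.ncard hinf] at hcard
      omega
    refine ⟨hfin.toFinset, ?_, ?_, ?_, ?_⟩
    · rw [← Set.ncard_eq_toFinset_card _ hfin]
      exact hcard
    · simp [Set.Finite.mem_toFinset, hz0]
    · intro n _
      simp [Set.Finite.mem_toFinset]
    · have h0' : 0 ∈ hfin.toFinset := by simp [Set.Finite.mem_toFinset, hz0]
      obtain ⟨hmem, hbd⟩ := mx_spec (⟨0, h0'⟩ : hfin.toFinset.Nonempty)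
      rw [← aft_iff hz (fun n _ => by simp [Set.Finite.mem_toFinset]) hmem hbd]
      intro n hn
      by_contra hc
      have hzn : z n = true := by
        cases hzb : z n
        · exact absurd hzb hc
        · rfl
      have : n ∈ hfin.toFinset := by simp [Set.Finite.mem_toFinset, hzn]
      have := hbd n this
      omega
  · rintro ⟨S, hc, h0, hp, ha⟩
    obtain ⟨hmem, hbd⟩ := mx_spec (⟨0, h0⟩ : S.Nonempty)
    have hdead : ∀ n, mx S < n → z n = false := (aft_iff hz hp hmem hbd).2 ha
    rw [informed_eq h0 hp hdead, Set.ncard_coe_finset, hc]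

/-- The informed set is infinite iff patterns of every cardinality exist. -/
lemma infinite_iff
    (hz0 : z 0 = true)
    (hz : ∀ n, 0 < n → (z n = true ↔ ∃ m < n, z m = true ∧ n - m ≤ ρ n)) :
    {n | z n = true}.Infinite ↔
      ∀ m, 1 ≤ m → ∃ S : Finset ℕ, S.card = m ∧ 0 ∈ S ∧ pat z S (mx S) := by
  constructor
  · intro hinf m hm
    induction m with
    | zero => omega
    | succ m ihm =>
      by_cases hm0 : m = 0
      · subst hm0
        obtain ⟨a, b, c⟩ := pat_one hz0
        exact ⟨{0}, a, b, c⟩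
      · obtain ⟨S, hc, h0, hp⟩ := ihm (by omega)
        by_cases ha : aft ρ (mx S)
        · exfalso
          obtain ⟨hmem, hbd⟩ := mx_spec (⟨0, h0⟩ : S.Nonempty)
          have hdead := (aft_iff hz hp hmem hbd).2 ha
          exact hinf (by rw [informed_eq h0 hp hdead]; exact S.finite_toSet)
        · exact pat_extend hz hc h0 hp ha
  · intro h
    by_contra hninf
    rw [Set.not_infinite] at hninf
    obtain ⟨S, hc, h0, hp⟩ := h ({n | z n = true}.ncard + 1) (by omega)
    obtain ⟨hmem, hbd⟩ := mx_spec (⟨0, h0⟩ : S.Nonempty)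
    have hsub : (↑S : Set ℕ) ⊆ {n | z n = true} := by
      intro n hn
      simp only [Finset.mem_coe] at hn
      exact (hp n (hbd n hn)).2 hn
    have := Set.ncard_le_ncard hsub hninf
    rw [Set.ncard_coe_finset, hc] at this
    omega

end Pure

noncomputable def BF (S : Finset ℕ) (n : ℕ) : Set ℕ :=
  if n ≤ mx S then {x | cond S n x} else {x | x ≤ n - (mx S + 1)}

lemma BF_le {S : Finset ℕ} {n : ℕ} (h : n ≤ mx S) : BF S n = {x | cond S n x} := if_pos h

lemma BF_gt {S : Finset ℕ} {n : ℕ} (h : mx S < n) :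
    BF S n = {x | x ≤ n - (mx S + 1)} := if_neg (by omega)

section Measure

open MeasureTheory ProbabilityTheory Filter

variable {Ω : Type*} [MeasurableSpace Ω] (P : Measure Ω) [IsProbabilityMeasure P]
  (R : ℕ → Ω → ℕ) (ζ : ℕ → Ω → Bool)

lemma event_eq
    (hζ0 : ∀ ω, ζ 0 ω = true)
    (hζ : ∀ n : ℕ, 0 < n → ∀ ω, (ζ n ω = true ↔ ∃ m < n, ζ m ω = true ∧ n - m ≤ R n ω))
    {S : Finset ℕ} (h0 : 0 ∈ S) (K : ℕ) :
    {ω | pat (fun n => ζ n ω) S (mx S)} ∩ {ω | ∀ i, i < K → R (mx S + 1 + i) ω ≤ i}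
      = ⋂ n ∈ (Finset.Icc 1 (mx S) ∪ Finset.Ico (mx S + 1) (mx S + 1 + K)),
          (R n) ⁻¹' (BF S n) := by
  ext ω
  simp only [Set.mem_inter_iff, Set.mem_setOf_eq, Set.mem_iInter, Set.mem_preimage,
    Finset.mem_union, Finset.mem_Icc, Finset.mem_Ico]
  rw [pat_iff (hζ0 ω) (fun n hn => hζ n hn ω) h0]
  constructor
  · rintro ⟨hpat, hK⟩ n hn
    rcases hn with ⟨h1, h2⟩ | ⟨h1, h2⟩
    · rw [BF_le h2]
      exact hpat n h1 h2
    · rw [BF_gt (by omega)]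
      have hi := hK (n - (mx S + 1)) (by omega)
      have he : mx S + 1 + (n - (mx S + 1)) = n := by omega
      rw [he] at hi
      exact hi
  · intro h
    constructor
    · intro n h1 h2
      have := h n (Or.inl ⟨h1, h2⟩)
      rw [BF_le h2] at this
      exact this
    · intro i hi
      have := h (mx S + 1 + i) (Or.inr ⟨by omega, by omega⟩)
      rw [BF_gt (by omega)] at this
      rw [Set.mem_setOf_eq] at this
      omega

lemma measure_CK
    (hmeas : ∀ i, Measurable (R i))
    (hindep : iIndepFun R P)
    (hident : ∀ i, Measure.map (R i) P = Measure.map (R 0) P)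
    (α : ℕ → ℝ≥0∞) (hα : ∀ k, P {ω | R 0 ω ≤ k} = α k)
    (hζ0 : ∀ ω, ζ 0 ω = true)
    (hζ : ∀ n : ℕ, 0 < n → ∀ ω, (ζ n ω = true ↔ ∃ m < n, ζ m ω = true ∧ n - m ≤ R n ω))
    {S : Finset ℕ} (h0 : 0 ∈ S) (K : ℕ) :
    P ({ω | pat (fun n => ζ n ω) S (mx S)} ∩ {ω | ∀ i, i < K → R (mx S + 1 + i) ω ≤ i})
      = (∏ n ∈ Finset.Icc 1 (mx S), P ((R n) ⁻¹' BF S n)) * ∏ i ∈ Finset.range K, α i := by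
  have hsingle : ∀ n k, P ((R n) ⁻¹' {x | x ≤ k}) = α k := by
    intro n k
    have h1 : P ((R n) ⁻¹' {x | x ≤ k}) = Measure.map (R n) P {x | x ≤ k} :=
      (Measure.map_apply (hmeas n) .of_discrete).symm
    rw [h1, hident n, Measure.map_apply (hmeas 0) .of_discrete]
    exact hα k
  rw [event_eq R ζ hζ0 hζ h0 K,
    hindep.measure_inter_preimage_eq_mul _ (fun i _ => .of_discrete)]
  have hdisj : Disjoint (Finset.Icc 1 (mx S)) (Finset.Ico (mx S + 1) (mx S + 1 + K)) := by
    rw [Finset.disjoint_left]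
    intro a ha hb
    rw [Finset.mem_Icc] at ha
    rw [Finset.mem_Ico] at hb
    omega
  rw [Finset.prod_union hdisj]
  congr 1
  have he : ∀ n ∈ Finset.Ico (mx S + 1) (mx S + 1 + K),
      P ((R n) ⁻¹' BF S n) = α (n - (mx S + 1)) := by
    intro n hn
    rw [Finset.mem_Ico] at hn
    rw [BF_gt (by omega), hsingle]
  rw [Finset.prod_congr rfl he, Finset.prod_Ico_eq_prod_range]
  have h1 : mx S + 1 + K - (mx S + 1) = K := by omega
  rw [h1]
  refine Finset.prod_congr rfl fun i _ => ?_
  congr 1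
  omega

lemma measure_C
    (hmeas : ∀ i, Measurable (R i))
    (hindep : iIndepFun R P)
    (hident : ∀ i, Measure.map (R i) P = Measure.map (R 0) P)
    (α : ℕ → ℝ≥0∞) (hα : ∀ k, P {ω | R 0 ω ≤ k} = α k)
    (hζ0 : ∀ ω, ζ 0 ω = true)
    (hζ : ∀ n : ℕ, 0 < n → ∀ ω, (ζ n ω = true ↔ ∃ m < n, ζ m ω = true ∧ n - m ≤ R n ω))
    {S : Finset ℕ} (h0 : 0 ∈ S) :
    P {ω | pat (fun n => ζ n ω) S (mx S)}
      = ∏ n ∈ Finset.Icc 1 (mx S), P ((R n) ⁻¹' BF S n) := by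
  have h := measure_CK P R ζ hmeas hindep hident α hα hζ0 hζ h0 0
  simpa using h

lemma measurable_C
    (hmeas : ∀ i, Measurable (R i))
    (hζ0 : ∀ ω, ζ 0 ω = true)
    (hζ : ∀ n : ℕ, 0 < n → ∀ ω, (ζ n ω = true ↔ ∃ m < n, ζ m ω = true ∧ n - m ≤ R n ω))
    {S : Finset ℕ} (h0 : 0 ∈ S) :
    MeasurableSet {ω | pat (fun n => ζ n ω) S (mx S)} := by
  have hset : {ω : Ω | pat (fun n => ζ n ω) S (mx S)} =
      ⋂ (n : ℕ) (_ : 1 ≤ n) (_ : n ≤ mx S), (R n) ⁻¹' {x | cond S n x} := by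
    ext ω
    simp only [Set.mem_setOf_eq, Set.mem_iInter, Set.mem_preimage]
    exact pat_iff (hζ0 ω) (fun n hn => hζ n hn ω) h0 (mx S)
  rw [hset]
  exact MeasurableSet.iInter fun n => MeasurableSet.iInter fun _ =>
    MeasurableSet.iInter fun _ => (hmeas n) .of_discrete

lemma measurable_A
    (hmeas : ∀ i, Measurable (R i)) (t : ℕ) :
    MeasurableSet {ω : Ω | aft (fun n => R n ω) t} := by
  have hset : {ω : Ω | aft (fun n => R n ω) t} =
      ⋂ (i : ℕ), (R (t + 1 + i)) ⁻¹' {x | x ≤ i} := by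
    ext ω
    simp only [Set.mem_setOf_eq, Set.mem_iInter, Set.mem_preimage, aft]
  rw [hset]
  exact MeasurableSet.iInter fun i => (hmeas _) .of_discrete

lemma measure_C_inter_A
    (hmeas : ∀ i, Measurable (R i))
    (hindep : iIndepFun R P)
    (hident : ∀ i, Measure.map (R i) P = Measure.map (R 0) P)
    (α : ℕ → ℝ≥0∞) (hα : ∀ k, P {ω | R 0 ω ≤ k} = α k)
    (r : ℝ≥0∞)
    (hprod : Tendsto (fun n => ∏ i ∈ Finset.range n, α i) atTop (nhds r))
    (hζ0 : ∀ ω, ζ 0 ω = true)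
    (hζ : ∀ n : ℕ, 0 < n → ∀ ω, (ζ n ω = true ↔ ∃ m < n, ζ m ω = true ∧ n - m ≤ R n ω))
    {S : Finset ℕ} (h0 : 0 ∈ S) :
    P ({ω | pat (fun n => ζ n ω) S (mx S)} ∩ {ω | aft (fun n => R n ω) (mx S)})
      = P {ω | pat (fun n => ζ n ω) S (mx S)} * r := by
  set C : Set Ω := {ω | pat (fun n => ζ n ω) S (mx S)} with hCdef
  set sK : ℕ → Set Ω := fun K => C ∩ {ω | ∀ i, i < K → R (mx S + 1 + i) ω ≤ i} with hsK
  have hiInter : ⋂ K, sK K = C ∩ {ω | aft (fun n => R n ω) (mx S)} := by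
    ext ω
    simp only [hsK, Set.mem_iInter, Set.mem_inter_iff, Set.mem_setOf_eq, aft]
    constructor
    · intro h
      exact ⟨(h 0).1, fun i => (h (i + 1)).2 i (by omega)⟩
    · rintro ⟨h1, h2⟩ K
      exact ⟨h1, fun i _ => h2 i⟩
  have hCm : MeasurableSet C := measurable_C R ζ hmeas hζ0 hζ h0
  have hmeasK : ∀ K, MeasurableSet (sK K) := by
    intro K
    refine hCm.inter ?_
    have : {ω : Ω | ∀ i, i < K → R (mx S + 1 + i) ω ≤ i} =
        ⋂ (i : ℕ) (_ : i < K), (R (mx S + 1 + i)) ⁻¹' {x | x ≤ i} := by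
      ext ω
      simp only [Set.mem_setOf_eq, Set.mem_iInter, Set.mem_preimage]
    rw [this]
    exact MeasurableSet.iInter fun i => MeasurableSet.iInter fun _ => (hmeas _) .of_discrete
  have hanti : Antitone sK := by
    intro a b hab
    exact Set.inter_subset_inter_right C fun ω hω i hia => hω i (lt_of_lt_of_le hia hab)
  have ht := tendsto_measure_iInter_atTop (fun K => (hmeasK K).nullMeasurableSet) hanti
    ⟨0, measure_ne_top P _⟩
  rw [hiInter] at ht
  have ht2 : Tendsto (fun K => P (sK K)) atTop (nhds (P C * r)) := by
    have heq : (fun K => P (sK K)) = fun K => P C * ∏ i ∈ Finset.range K, α i := by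
      funext K
      rw [hsK]
      rw [measure_CK P R ζ hmeas hindep hident α hα hζ0 hζ h0 K,
        measure_C P R ζ hmeas hindep hident α hα hζ0 hζ h0]
    rw [heq]
    exact ENNReal.Tendsto.const_mul hprod (Or.inr (measure_ne_top P _))
  exact tendsto_nhds_unique ht ht2

end Measure

end RumorAux

open MeasureTheory ProbabilityTheory Filter Finset
open scoped ENNReal

/-- in the Reverse Firework process, if `r := ∏_{k≥0} α_k > 0`, the rumor
dies out almost surely and the final number of spreaders `N` is geometric with parameter
`r`: `P(N = m) = (1-r)^{m-1} r` for `m ≥ 1`. -/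
theorem rumor_stmt_11 {Ω : Type*} [MeasurableSpace Ω] (P : Measure Ω) [IsProbabilityMeasure P]
    (R : ℕ → Ω → ℕ) (hmeas : ∀ i, Measurable (R i))
    (hindep : iIndepFun R P)
    (hident : ∀ i, Measure.map (R i) P = Measure.map (R 0) P)
    (α : ℕ → ℝ≥0∞) (hα : ∀ k, P {ω | R 0 ω ≤ k} = α k)
    (hle1 : ∀ k, α k ≤ 1) (hα0 : 0 < α 0 ∧ α 0 < 1)
    (r : ℝ≥0∞) (hrpos : 0 < r)
    (hprod : Tendsto (fun n => ∏ i ∈ Finset.range n, α i) atTop (nhds r))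
    (ζ : ℕ → Ω → Bool)
    (hζ0 : ∀ ω, ζ 0 ω = true)
    (hζ : ∀ n : ℕ, 0 < n → ∀ ω,
      (ζ n ω = true ↔ ∃ m < n, ζ m ω = true ∧ n - m ≤ R n ω)) :
    P {ω | {n : ℕ | ζ n ω = true}.Infinite} = 0 ∧
      ∀ m : ℕ, 1 ≤ m →
        P {ω | ({n : ℕ | ζ n ω = true}).ncard = m} = (1 - r) ^ (m - 1) * r := by
  classical
  set C : Finset ℕ → Set Ω := fun S => {ω | RumorAux.pat (fun n => ζ n ω) S (RumorAux.mx S)}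
    with hC
  set A : ℕ → Set Ω := fun t => {ω | RumorAux.aft (fun n => R n ω) t} with hA
  set D : ℕ → Set Ω :=
    fun m => ⋃ S : {S : Finset ℕ // S.card = m ∧ 0 ∈ S}, C S.1 with hD
  set G : ℕ → Set Ω :=
    fun m => ⋃ S : {S : Finset ℕ // S.card = m ∧ 0 ∈ S}, (C S.1 ∩ A (RumorAux.mx S.1)) with hG
  -- membership characterizations
  have hmemD : ∀ m ω, ω ∈ D m ↔ ∃ S : Finset ℕ, S.card = m ∧ 0 ∈ S ∧
      RumorAux.pat (fun n => ζ n ω) S (RumorAux.mx S) := by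
    intro m ω
    rw [hD]
    simp only [Set.mem_iUnion, hC, Set.mem_setOf_eq]
    constructor
    · rintro ⟨⟨S, hc, h0⟩, hp⟩; exact ⟨S, hc, h0, hp⟩
    · rintro ⟨S, hc, h0, hp⟩; exact ⟨⟨S, hc, h0⟩, hp⟩
  have hmemG : ∀ m ω, ω ∈ G m ↔ ∃ S : Finset ℕ, S.card = m ∧ 0 ∈ S ∧
      RumorAux.pat (fun n => ζ n ω) S (RumorAux.mx S) ∧
      RumorAux.aft (fun n => R n ω) (RumorAux.mx S) := by
    intro m ω
    rw [hG]
    simp only [Set.mem_iUnion, hC, hA, Set.mem_inter_iff, Set.mem_setOf_eq]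
    constructor
    · rintro ⟨⟨S, hc, h0⟩, hp, ha⟩; exact ⟨S, hc, h0, hp, ha⟩
    · rintro ⟨S, hc, h0, hp, ha⟩; exact ⟨⟨S, hc, h0⟩, hp, ha⟩
  -- measurability
  have hCmeas : ∀ S : Finset ℕ, 0 ∈ S → MeasurableSet (C S) := by
    intro S h0
    exact RumorAux.measurable_C R ζ hmeas hζ0 hζ h0
  have hAmeas : ∀ t, MeasurableSet (A t) := fun t => RumorAux.measurable_A R hmeas t
  have hDmeas : ∀ m, MeasurableSet (D m) := by
    intro m
    rw [hD]
    exact MeasurableSet.iUnion fun S => hCmeas S.1 S.2.2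
  -- disjointness of the C's
  have hCdisj : ∀ m, ∀ S S' : {S : Finset ℕ // S.card = m ∧ 0 ∈ S}, S ≠ S' →
      Disjoint (C S.1) (C S'.1) := by
    intro m S S' hne
    rw [Set.disjoint_left]
    intro ω h1 h2
    rw [hC, Set.mem_setOf_eq] at h1 h2
    exact hne (Subtype.ext (RumorAux.pat_unique S.2.2 S'.2.2 S.2.1 S'.2.1 h1 h2))
  -- measures of D and G
  have hPD : ∀ m, P (D m) = ∑' S : {S : Finset ℕ // S.card = m ∧ 0 ∈ S}, P (C S.1) := by
    intro m
    rw [hD]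
    exact measure_iUnion (fun S S' hne => hCdisj m S S' hne) (fun S => hCmeas S.1 S.2.2)
  have hPG : ∀ m, P (G m) = P (D m) * r := by
    intro m
    rw [hG]
    rw [measure_iUnion (fun S S' hne => Disjoint.mono Set.inter_subset_left
        Set.inter_subset_left (hCdisj m S S' hne))
      (fun S => (hCmeas S.1 S.2.2).inter (hAmeas _))]
    have heq : ∀ S : {S : Finset ℕ // S.card = m ∧ 0 ∈ S},
        P (C S.1 ∩ A (RumorAux.mx S.1)) = P (C S.1) * r := by
      intro S
      exact RumorAux.measure_C_inter_A P R ζ hmeas hindep hident α hα r hprod hζ0 hζ S.2.2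
    rw [tsum_congr heq, ENNReal.tsum_mul_right, ← hPD]
  -- partition identity
  have hpart : ∀ m, 1 ≤ m → D m = G m ∪ D (m + 1) := by
    intro m hm
    ext ω
    rw [Set.mem_union, hmemD, hmemG, hmemD]
    constructor
    · rintro ⟨S, hc, h0, hp⟩
      by_cases ha : RumorAux.aft (fun n => R n ω) (RumorAux.mx S)
      · exact Or.inl ⟨S, hc, h0, hp, ha⟩
      · obtain ⟨S', hc', h0', hp'⟩ :=
          RumorAux.pat_extend (fun n hn => hζ n hn ω) hc h0 hp ha
        exact Or.inr ⟨S', hc', h0', hp'⟩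
    · rintro (⟨S, hc, h0, hp, _⟩ | ⟨S', hc', h0', hp'⟩)
      · exact ⟨S, hc, h0, hp⟩
      · exact RumorAux.pat_erase hm hc' h0' hp'
  -- disjointness of the partition
  have hpdisj : ∀ m, Disjoint (G m) (D (m + 1)) := by
    intro m
    rw [Set.disjoint_left]
    intro ω h1 h2
    rw [hmemG] at h1
    rw [hmemD] at h2
    obtain ⟨S, hc, h0, hp, ha⟩ := h1
    obtain ⟨S'', hc'', h0'', hp''⟩ := h2
    exact RumorAux.pat_aft_excl (fun n hn => hζ n hn ω) (by omega : m < m + 1)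
      hc h0 hp ha hc'' h0'' hp''
  -- recursion
  have hrec : ∀ m, 1 ≤ m → P (D m) = P (D m) * r + P (D (m + 1)) := by
    intro m hm
    conv_lhs => rw [hpart m hm]
    rw [measure_union (hpdisj m) (hDmeas (m + 1)), hPG]
  -- base case
  have hbase : P (D 1) = 1 := by
    have huniv : D 1 = Set.univ := by
      rw [Set.eq_univ_iff_forall]
      intro ω
      rw [hmemD]
      obtain ⟨a, b, c⟩ := RumorAux.pat_one (z := fun n => ζ n ω) (hζ0 ω)
      exact ⟨{0}, a, b, c⟩
    rw [huniv, measure_univ]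
  -- r ≤ 1
  have hr1 : r ≤ 1 := le_of_tendsto' hprod fun n =>
    Finset.prod_le_one (fun i _ => zero_le) (fun i _ => hle1 i)
  -- induction : P (D (m+1)) = (1-r)^m
  have hval : ∀ m : ℕ, P (D (m + 1)) = (1 - r) ^ m := by
    intro m
    induction m with
    | zero => rw [hbase, pow_zero]
    | succ m ih =>
      have h1 := hrec (m + 1) (by omega)
      rw [ih] at h1
      have h2 : (1 - r) ^ m = (1 - r) ^ m * r + (1 - r) ^ m * (1 - r) := by
        rw [← mul_add]
        have : r + (1 - r) = 1 := by
          rw [add_comm]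
          exact tsub_add_cancel_of_le hr1
        rw [this, mul_one]
      have hfin : (1 - r) ^ m * r ≠ ∞ :=
        ne_top_of_le_ne_top ENNReal.one_ne_top
          (mul_le_one' (pow_le_one' tsub_le_self m) hr1)
      have h3 : (1 - r) ^ m * r + P (D (m + 1 + 1)) = (1 - r) ^ m * r + (1 - r) ^ m * (1 - r) :=
        h1.symm.trans h2
      have h4 := (ENNReal.add_right_inj hfin).1 h3
      rw [h4, ← pow_succ]
  constructor
  · -- almost sure extinction
    have hsub : ∀ m : ℕ, {ω | {n : ℕ | ζ n ω = true}.Infinite} ⊆ D (m + 1) := by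
      intro m ω hω
      rw [Set.mem_setOf_eq] at hω
      rw [hmemD]
      exact (RumorAux.infinite_iff (hζ0 ω) (fun n hn => hζ n hn ω)).1 hω (m + 1) (by omega)
    have hle : ∀ m : ℕ, P {ω | {n : ℕ | ζ n ω = true}.Infinite} ≤ (1 - r) ^ m :=
      fun m => le_of_le_of_eq (measure_mono (hsub m)) (hval m)
    have htend : Tendsto (fun m : ℕ => ((1 : ℝ≥0∞) - r) ^ m) atTop (nhds 0) :=
      ENNReal.tendsto_pow_atTop_nhds_zero_of_lt_one
        (ENNReal.sub_lt_self ENNReal.one_ne_top one_ne_zero (ne_of_gt hrpos))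
    exact le_antisymm (ge_of_tendsto' htend hle) zero_le
  · -- geometric distribution
    intro m hm
    obtain ⟨k, rfl⟩ : ∃ k, m = k + 1 := ⟨m - 1, by omega⟩
    have hset : {ω | ({n : ℕ | ζ n ω = true}).ncard = k + 1} = G (k + 1) := by
      ext ω
      rw [Set.mem_setOf_eq,
        RumorAux.ncard_iff (hζ0 ω) (fun n hn => hζ n hn ω) (by omega : 1 ≤ k + 1), hmemG]
    rw [hset, hPG, hval k]
    norm_num
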